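/- Let R be a ring with unity contained in a field E, and let a be an element of E. Then a is integral over R if and only if every place φ of E (a map E → F ∪ {∞} to a field F with ∞, satisfying φ(1)=1, φ(a+b)=φ(a)+φ(b) and φ(ab)=φ(a)φ(b) whenever the right-hand sides are defined) that takes finite values on all of R also takes a finite value on a. -/

import Mathlib

/-- A place of a field `E` with values in `F ∪ {∞}`, modelled as `E → Option F`
with `none` playing the role of `∞`.  The axioms state `φ(1)=1`,
`φ(a+b)=φ(a)+φ(b)` and `φ(ab)=φ(a)φ(b)` whenever the right-hand sides are
defined, with the conventions `c+∞=∞`, `c·∞=∞` for `c ≠ 0` and `∞·∞=∞`. -/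
structure IsPlace {E F : Type*} [Field E] [Field F] (φ : E → Option F) : Prop where
  map_one : φ 1 = some 1
  add_fin : ∀ a b x y, φ a = some x → φ b = some y → φ (a + b) = some (x + y)
  add_inf : ∀ a b x, φ a = some x → φ b = none → φ (a + b) = none
  mul_fin : ∀ a b x y, φ a = some x → φ b = some y → φ (a * b) = some (x * y)
  mul_inf : ∀ a b x, φ a = some x → x ≠ 0 → φ b = none → φ (a * b) = none
  inf_mul_inf : ∀ a b, φ a = none → φ b = none → φ (a * b) = none

section Helpers

variable {E F : Type*} [Field E] [Field F] {φ : E → Option F}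

lemma IsPlace.map_zero (hφ : IsPlace φ) : φ 0 = some 0 := by
  rcases h : φ 0 with _ | t
  · have := hφ.add_inf 1 0 1 hφ.map_one h
    rw [add_zero, hφ.map_one] at this
    exact absurd this (by simp)
  · have := hφ.add_fin 0 0 t t h h
    rw [add_zero, h] at this
    have ht : t = t + t := by simpa using this
    have : t = 0 := by linear_combination -ht
    exact congrArg some this


lemma IsPlace.sum_zero (hφ : IsPlace φ) {ι : Type*} (s : Finset ι) (f : ι → E)
    (hf : ∀ i ∈ s, φ (f i) = some 0) : φ (∑ i ∈ s, f i) = some 0 := by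
  induction s using Finset.cons_induction with
  | empty => simpa using hφ.map_zero
  | cons j s hj ih =>
    rw [Finset.sum_cons]
    have h1 := hf j (Finset.mem_cons_self j s)
    have h2 := ih fun i hi => hf i (Finset.mem_cons_of_mem hi)
    have := hφ.add_fin _ _ 0 0 h1 h2
    simpa using this

-- The place associated to a valuation subring: reduce to the residue field, with
-- elements outside the subring going to `∞`.
open Classical in
noncomputable def placeOfValuationSubring {E : Type*} [Field E] (B : ValuationSubring E) :
    E → Option (IsLocalRing.ResidueField B) :=
  fun x => if h : x ∈ B then some (IsLocalRing.residue B (⟨x, h⟩ : B)) else none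

lemma placeOfValuationSubring_pos {E : Type*} [Field E] (B : ValuationSubring E)
    {x : E} (h : x ∈ B) :
    placeOfValuationSubring B x = some (IsLocalRing.residue B (⟨x, h⟩ : B)) := dif_pos h

lemma placeOfValuationSubring_neg {E : Type*} [Field E] (B : ValuationSubring E)
    {x : E} (h : x ∉ B) : placeOfValuationSubring B x = none := dif_neg h

lemma placeOfValuationSubring_mem {E : Type*} [Field E] (B : ValuationSubring E)
    {x : E} {v : IsLocalRing.ResidueField B}
    (h : placeOfValuationSubring B x = some v) : x ∈ B := by
  by_contra hx
  rw [placeOfValuationSubring_neg B hx] at h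
  cases h

lemma placeOfValuationSubring_not_mem {E : Type*} [Field E] (B : ValuationSubring E)
    {x : E} (h : placeOfValuationSubring B x = none) : x ∉ B := by
  intro hx
  rw [placeOfValuationSubring_pos B hx] at h
  cases h

lemma IsPlace.ofValuationSubring {E : Type*} [Field E] (B : ValuationSubring E) :
    IsPlace (placeOfValuationSubring B) := by
  have hmem : ∀ {x y : E}, x ∈ B → x + y ∈ B → y ∈ B := by
    intro x y hx hxy
    have : y = (x + y) - x := by ring
    rw [this]; exact sub_mem hxy hx
  constructor
  · rw [placeOfValuationSubring_pos B (one_mem B)]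
    have h1 : (⟨1, one_mem B⟩ : B) = 1 := rfl
    rw [h1]
    exact congrArg some (_root_.map_one (IsLocalRing.residue B))
  · intro a b x y ha hb
    have haB := placeOfValuationSubring_mem B ha
    have hbB := placeOfValuationSubring_mem B hb
    rw [placeOfValuationSubring_pos B haB, Option.some_inj] at ha
    rw [placeOfValuationSubring_pos B hbB, Option.some_inj] at hb
    rw [placeOfValuationSubring_pos B (add_mem haB hbB)]
    have : (⟨a + b, add_mem haB hbB⟩ : B) = ⟨a, haB⟩ + ⟨b, hbB⟩ := rfl
    rw [this, map_add, ha, hb]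
  · intro a b x ha hb
    have haB := placeOfValuationSubring_mem B ha
    have hbB := placeOfValuationSubring_not_mem B hb
    apply placeOfValuationSubring_neg
    intro h
    exact hbB (hmem haB h)
  · intro a b x y ha hb
    have haB := placeOfValuationSubring_mem B ha
    have hbB := placeOfValuationSubring_mem B hb
    rw [placeOfValuationSubring_pos B haB, Option.some_inj] at ha
    rw [placeOfValuationSubring_pos B hbB, Option.some_inj] at hb
    rw [placeOfValuationSubring_pos B (mul_mem haB hbB)]
    have : (⟨a * b, mul_mem haB hbB⟩ : B) = ⟨a, haB⟩ * ⟨b, hbB⟩ := rfl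
    rw [this, map_mul, ha, hb]
  · intro a b x ha hx hb
    have haB := placeOfValuationSubring_mem B ha
    rw [placeOfValuationSubring_pos B haB, Option.some_inj] at ha
    have hbB := placeOfValuationSubring_not_mem B hb
    have hu : IsUnit (⟨a, haB⟩ : B) := by
      rw [← IsLocalRing.residue_ne_zero_iff_isUnit, ha]
      exact hx
    obtain ⟨u, hu⟩ := hu
    apply placeOfValuationSubring_neg
    intro habB
    apply hbB
    have h1 : ((u⁻¹ : Bˣ) : B).1 * a = 1 := by
      have h2 : ((u⁻¹ : Bˣ) : B) * ⟨a, haB⟩ = 1 := by rw [← hu]; exact u.inv_mul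
      exact congrArg Subtype.val h2
    have : b = ((u⁻¹ : Bˣ) : B).1 * (a * b) := by rw [← mul_assoc, h1, one_mul]
    rw [this]
    exact mul_mem ((u⁻¹ : Bˣ) : B).2 habB
  · intro a b ha hb
    have haB := placeOfValuationSubring_not_mem B ha
    have hbB := placeOfValuationSubring_not_mem B hb
    have hb0 : b ≠ 0 := fun e => hbB (e ▸ zero_mem B)
    have hbi : b⁻¹ ∈ B := (B.mem_or_inv_mem b).resolve_left hbB
    apply placeOfValuationSubring_neg
    intro habB
    apply haB
    have : a = (a * b) * b⁻¹ := by field_simp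
    rw [this]
    exact mul_mem habB hbi

end Helpers

/-- An element `a` of a field `E` is integral over a subring `R ⊆ E` if and only if
every place of `E` that is finite on `R` is finite on `a`. -/
theorem isIntegral_iff_forall_place_finite {E : Type} [Field E] (R : Subring E) (a : E) :
    IsIntegral R a ↔
      ∀ (F : Type) [Field F] (φ : E → Option F), IsPlace φ →
        (∀ r : E, r ∈ R → (φ r).isSome) → (φ a).isSome := by
  constructor
  · -- forward direction
    rintro ⟨p, pm, hp⟩ F _ φ hφ hR
    by_contra hns
    have ha : φ a = none := Option.not_isSome_iff_eq_none.mp hns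
    have ha0 : a ≠ 0 := by
      rintro rfl
      rw [hφ.map_zero] at ha
      cases ha
    set b := a⁻¹ with hbdef
    -- φ b = some 0
    obtain ⟨y, hb⟩ : ∃ y, φ b = some y := by
      rcases h : φ b with _ | y
      · have := hφ.inf_mul_inf a b ha h
        rw [mul_inv_cancel₀ ha0, hφ.map_one] at this
        exact absurd this (by simp)
      · exact ⟨y, rfl⟩
    have hy0 : y = 0 := by
      by_contra hy
      have := hφ.mul_inf b a y hb hy ha
      rw [inv_mul_cancel₀ ha0, hφ.map_one] at this
      cases this
    rw [hy0] at hb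
    have hbk : ∀ k : ℕ, φ (b ^ (k + 1)) = some 0 := by
      intro k
      induction k with
      | zero => simpa using hb
      | succ k ih =>
        have := hφ.mul_fin b (b ^ (k + 1)) 0 0 hb ih
        rw [← pow_succ'] at this
        simpa using this
    set n := p.natDegree with hn
    have hab : a * b = 1 := by rw [hbdef, mul_inv_cancel₀ ha0]
    have hsum : ∑ i ∈ Finset.range (n + 1), algebraMap R E (p.coeff i) * a ^ i = 0 := by
      have : Polynomial.eval₂ (algebraMap R E) a p = 0 := hp
      rw [Polynomial.eval₂_eq_sum_range] at this
      exact this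
    set g : ℕ → E := fun i => algebraMap R E (p.coeff i) * b ^ (n - i) with hg
    have hgsum : ∑ i ∈ Finset.range (n + 1), g i = 0 := by
      have : ∀ i ∈ Finset.range (n + 1), g i =
          (algebraMap R E (p.coeff i) * a ^ i) * b ^ n := by
        intro i hi
        rw [Finset.mem_range] at hi
        have hi' : i ≤ n := Nat.lt_succ_iff.mp hi
        have hpow : b ^ (n - i) = a ^ i * b ^ n := by
          calc b ^ (n - i) = (a * b) ^ i * b ^ (n - i) := by rw [hab, one_pow, one_mul]
            _ = a ^ i * (b ^ i * b ^ (n - i)) := by rw [mul_pow]; ring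
            _ = a ^ i * b ^ n := by rw [← pow_add, Nat.add_sub_cancel' hi']
        simp only [hg]
        rw [hpow]; ring
      rw [Finset.sum_congr rfl this, ← Finset.sum_mul, hsum, zero_mul]
    have hφlast : φ (g n) = some 1 := by
      have : g n = 1 := by
        rw [hg]
        simp only [Nat.sub_self, pow_zero, mul_one]
        rw [hn, pm.coeff_natDegree]
        exact map_one _
      rw [this, hφ.map_one]
    have hφinit : φ (∑ i ∈ Finset.range n, g i) = some 0 := by
      apply hφ.sum_zero
      intro i hi
      rw [Finset.mem_range] at hi
      obtain ⟨r, hr⟩ := Option.isSome_iff_exists.mp (hR _ (p.coeff i).2)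
      have hbni : φ (b ^ (n - i)) = some 0 := by
        have : n - i = (n - i - 1) + 1 := by omega
        rw [this]; exact hbk _
      have := hφ.mul_fin _ _ r 0 hr hbni
      rw [mul_zero] at this
      exact this
    have := hφ.add_fin _ _ 0 1 hφinit hφlast
    rw [← Finset.sum_range_succ, hgsum, hφ.map_zero] at this
    have : (0 : F) = 0 + 1 := Option.some_inj.mp this
    simp at this
  · -- backward direction
    intro h
    by_contra hna
    have ha0 : a ≠ 0 := by rintro rfl; exact hna isIntegral_zero
    set b := a⁻¹ with hbdef
    have hb0 : b ≠ 0 := inv_ne_zero ha0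
    -- the subring R[b]
    set S : Subring E := (Algebra.adjoin R ({b} : Set E)).toSubring with hS
    have hbS : b ∈ S := Algebra.self_mem_adjoin_singleton R b
    have hRS : ∀ r ∈ R, r ∈ S := fun r hr =>
      (Algebra.adjoin R ({b} : Set E)).algebraMap_mem ⟨r, hr⟩
    -- b is not a unit in S: the ideal it generates is proper
    have hspan : Ideal.span {(⟨b, hbS⟩ : S)} ≠ ⊤ := by
      intro htop
      have h1 : (1 : S) ∈ Ideal.span {(⟨b, hbS⟩ : S)} := htop ▸ Submodule.mem_top
      obtain ⟨c, hc⟩ := Ideal.mem_span_singleton'.mp h1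
      -- c * b = 1 in S, hence in E
      have hcE : (c : E) * b = 1 := congrArg Subtype.val hc
      -- c is a polynomial in b over R
      have hcmem : (c : E) ∈ Algebra.adjoin R ({b} : Set E) := c.2
      rw [Algebra.adjoin_singleton_eq_range_aeval] at hcmem
      obtain ⟨q, hq⟩ := hcmem
      have hq' : Polynomial.aeval b q = (c : E) := hq
      apply hna
      -- the polynomial q * X - 1 kills b; reverse it to get integrality of a
      set f : Polynomial R := q * Polynomial.X - 1 with hf
      have hfb : Polynomial.aeval b f = 0 := by
        rw [hf, map_sub, map_mul, Polynomial.aeval_X, map_one, hq', hcE, sub_self]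
      have hf0 : f.coeff 0 = -1 := by
        rw [hf]
        simp [Polynomial.coeff_mul_X]
      have hfne : f ≠ 0 := fun e => by simp [e] at hf0
      have htd : f.natTrailingDegree = 0 :=
        Polynomial.natTrailingDegree_eq_zero.mpr (Or.inr (by rw [hf0]; norm_num))
      have hinv : Invertible b := (isUnit_iff_ne_zero.mpr hb0).invertible
      have hrev : Polynomial.aeval a f.reverse = 0 := by
        have hba : ⅟ b = a := by
          apply invOf_eq_right_inv
          rw [hbdef]
          exact inv_mul_cancel₀ ha0
        rw [Polynomial.aeval_def, ← hba]
        rw [Polynomial.eval₂_reverse_eq_zero_iff]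
        rw [← Polynomial.aeval_def]
        exact hfb
      refine ⟨-f.reverse, ?_, ?_⟩
      · rw [Polynomial.Monic.def, Polynomial.leadingCoeff_neg,
          Polynomial.reverse_leadingCoeff, Polynomial.trailingCoeff, htd, hf0]
        norm_num
      · show Polynomial.aeval a (-f.reverse) = 0
        rw [map_neg, hrev, neg_zero]
    -- get a maximal ideal above b
    obtain ⟨M, hM, hbM⟩ := Ideal.exists_le_maximal _ hspan
    have : M.IsPrime := hM.isPrime
    -- extend the local ring S_M to a valuation subring B
    obtain ⟨B, hB⟩ := (LocalSubring.ofPrime S M).exists_le_valuationSubring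
    have hSB : ∀ x ∈ S, x ∈ B.toSubring := fun x hx => hB.1 (LocalSubring.le_ofPrime S M hx)
    -- b is not a unit in B
    have hbB : b ∈ B.toSubring := hSB b hbS
    have hbnu : ¬ IsUnit (⟨b, hbB⟩ : B.toSubring) := by
      intro hu
      -- transfer along the local hom from S_M to B
      have hbP : b ∈ (LocalSubring.ofPrime S M).toSubring := LocalSubring.le_ofPrime S M hbS
      have : IsUnit (Subring.inclusion hB.1 ⟨b, hbP⟩) := by
        exact hu
      have hu' : IsUnit (⟨b, hbP⟩ : (LocalSubring.ofPrime S M).toSubring) := by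
        obtain ⟨_, hloc⟩ := hB
        exact hloc.1 _ this
      -- but b lies in M, so it is not a unit in the localization
      have : IsUnit (algebraMap S (LocalSubring.ofPrime S M).toSubring ⟨b, hbS⟩) := hu'
      rw [IsLocalization.AtPrime.isUnit_to_map_iff
        (LocalSubring.ofPrime S M).toSubring M (⟨b, hbS⟩ : S)] at this
      exact this (hbM (Ideal.mem_span_singleton_self _))
    -- hence a ∉ B
    have haB : a ∉ B.toSubring := by
      intro haB
      apply hbnu
      exact isUnit_iff_exists_inv.mpr ⟨⟨a, haB⟩, Subtype.ext (by
        simp [hbdef, inv_mul_cancel₀ ha0])⟩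
    -- now apply the hypothesis to the place attached to B
    have hplace := IsPlace.ofValuationSubring B
    have := h (IsLocalRing.ResidueField B) _ hplace (fun r hr => by
      rw [placeOfValuationSubring_pos B (hSB r (hRS r hr))]; rfl)
    rw [placeOfValuationSubring_neg B haB] at this
    simp at this
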